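/- The function x ↦ √(1/x + 2 − (3/2)√6) is nonnegative and interval-integrable on (0, π/16], and −(1/2)·√(6√6) + (1/2)·∫ from 0 to π/16 of √(1/x + 2 − (3/2)√6) dx ≥ −1.6. -/

import Mathlib

open Real MeasureTheory

/-- The function `x ↦ √(1/x + 2 − (3/2)√6)` is nonnegative and
interval-integrable on `(0, π/16]`, and
`−(1/2)√(6√6) + (1/2)∫₀^{π/16} √(1/x + 2 − (3/2)√6) dx ≥ −1.6`. -/
theorem newtonian_tetrahedral_v_lower_bound :
    (∀ x ∈ Set.Ioc (0:ℝ) (π/16), 0 ≤ Real.sqrt (1/x + 2 - (3/2) * Real.sqrt 6)) ∧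
    IntervalIntegrable (fun x : ℝ => Real.sqrt (1/x + 2 - (3/2) * Real.sqrt 6))
      volume 0 (π/16) ∧
    -(1/2) * Real.sqrt (6 * Real.sqrt 6) +
      (1/2) * ∫ x in (0:ℝ)..(π/16), Real.sqrt (1/x + 2 - (3/2) * Real.sqrt 6)
      ≥ -1.6 := by
  have h6u : Real.sqrt 6 ≤ 2.4495 := by
    rw [Real.sqrt_le_iff]; constructor <;> norm_num
  have h6l : (2.449:ℝ) ≤ Real.sqrt 6 := by
    rw [Real.le_sqrt (by norm_num) (by norm_num)]; norm_num
  have hpiu : π < 3.15 := Real.pi_lt_d2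
  have hpil : (3.141592:ℝ) < π := Real.pi_gt_d6
  have ht0 : (0:ℝ) < π/16 := by linarith
  -- the integrand
  set f : ℝ → ℝ := fun x => Real.sqrt (1/x + 2 - (3/2) * Real.sqrt 6) with hf
  -- measurability
  have hmeas : Measurable f := by
    apply Real.continuous_sqrt.measurable.comp
    exact ((measurable_const.div measurable_id).add_const 2).sub_const _
  -- the comparison function x ^ (-1/2)
  have hrint : IntervalIntegrable (fun x : ℝ => x ^ (-(1/2) : ℝ)) volume 0 (π/16) :=
    intervalIntegral.intervalIntegrable_rpow' (by norm_num)
  -- on (0, π/16], f x ≤ x ^ (-1/2)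
  have hub : ∀ x ∈ Set.Ioc (0:ℝ) (π/16), f x ≤ x ^ (-(1/2) : ℝ) := by
    intro x hx
    have hx0 : 0 < x := hx.1
    have h1 : f x ≤ Real.sqrt (1/x) := by
      apply Real.sqrt_le_sqrt
      nlinarith [h6l]
    have h2 : Real.sqrt (1/x) = x ^ (-(1/2) : ℝ) := by
      rw [one_div, Real.sqrt_inv, Real.rpow_neg hx0.le, Real.sqrt_eq_rpow]
    linarith [h1, h2.ge, h2.le]
  have hint : IntervalIntegrable f volume 0 (π/16) := by
    apply hrint.mono_fun (hmeas.aestronglyMeasurable)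
    rw [Filter.EventuallyLE, ae_restrict_iff' measurableSet_uIoc]
    filter_upwards with x hx
    rw [Set.uIoc_of_le ht0.le] at hx
    have h1 := hub x hx
    have h2 : (0:ℝ) ≤ x ^ (-(1/2) : ℝ) := Real.rpow_nonneg hx.1.le _
    simp only [Real.norm_eq_abs, abs_of_nonneg (Real.sqrt_nonneg _), abs_of_nonneg h2]
    have h3 : (0:ℝ) ≤ f x := Real.sqrt_nonneg _
    rw [abs_of_nonneg h3]; exact h1
  -- lower bound function g x = (81/100) * x ^ (-1/2)
  have hgint : IntervalIntegrable (fun x : ℝ => (81/100) * x ^ (-(1/2) : ℝ)) volume 0 (π/16) :=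
    hrint.const_mul _
  have hlb : ∀ x ∈ Set.Icc (0:ℝ) (π/16), (81/100) * x ^ (-(1/2) : ℝ) ≤ f x := by
    intro x hx
    rcases eq_or_lt_of_le hx.1 with h0 | hx0
    · rw [← h0, Real.zero_rpow (by norm_num), mul_zero]
      exact Real.sqrt_nonneg _
    · have hxle : x ≤ π/16 := hx.2
      have hxle2 : x ≤ 0.2 := by linarith
      have hnn : (0:ℝ) ≤ (81/100) * x ^ (-(1/2) : ℝ) :=
        mul_nonneg (by norm_num) (Real.rpow_nonneg hx0.le _)
      have key : 1/x + 2 - (3/2) * Real.sqrt 6 ≥ (6561/10000) * (1/x) := by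
        have h1x : 1/x ≥ 5 := by
          rw [ge_iff_le, le_div_iff₀ hx0]; linarith
        nlinarith [h6u]
      rw [Real.le_sqrt hnn (by nlinarith [key, (by positivity : (0:ℝ) < 1/x)])]
      have hsq : (x ^ (-(1/2) : ℝ))^2 = 1/x := by
        rw [← Real.rpow_natCast (x ^ (-(1/2):ℝ)) 2, ← Real.rpow_mul hx0.le]
        norm_num
        exact Real.rpow_neg_one x
      rw [mul_pow, hsq]
      calc (81/100:ℝ)^2 * (1/x) = (6561/10000) * (1/x) := by norm_num
        _ ≤ 1/x + 2 - (3/2) * Real.sqrt 6 := key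
  have hIlow : (81/100) * (2 * Real.sqrt (π/16)) ≤ ∫ x in (0:ℝ)..(π/16), f x := by
    have hmono := intervalIntegral.integral_mono_on ht0.le hgint hint hlb
    have hval : (∫ x in (0:ℝ)..(π/16), (81/100) * x ^ (-(1/2) : ℝ))
        = (81/100) * (2 * Real.sqrt (π/16)) := by
      rw [intervalIntegral.integral_const_mul]
      rw [integral_rpow (Or.inl (by norm_num : (-1:ℝ) < -(1/2)))]
      rw [Real.zero_rpow (by norm_num : (-(1/2):ℝ) + 1 ≠ 0)]
      rw [Real.sqrt_eq_rpow]
      norm_num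
      ring
    rw [hval] at hmono
    exact hmono
  refine ⟨fun x _ => Real.sqrt_nonneg _, hint, ?_⟩
  -- numeric bounds
  have hA : Real.sqrt (6 * Real.sqrt 6) ≤ 3.834 := by
    rw [Real.sqrt_le_iff]
    constructor
    · norm_num
    · nlinarith [h6u]
  have hs : (0.443:ℝ) ≤ Real.sqrt (π/16) := by
    rw [Real.le_sqrt (by norm_num) (by linarith)]
    nlinarith [hpil]
  have : (81/100:ℝ) * (2 * Real.sqrt (π/16)) ≥ 0.717 := by nlinarith
  have hI : (0.717:ℝ) ≤ ∫ x in (0:ℝ)..(π/16), f x := by linarith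
  rw [ge_iff_le]
  have : -(1/2) * Real.sqrt (6 * Real.sqrt 6) ≥ -(1/2) * 3.834 := by linarith
  nlinarith [hI, hA]
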